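/- Let F be a strongly expansive IFS on a compact metric space with the shadowing property, e its expansive constant, and 0 < ε < e/3 with associated δ from shadowing. Then the shadowing map r : p(F,δ) → X, sending a δ-pseudo orbit to the unique point whose orbit ε-shadows it, is well-defined and continuous with respect to the metric d̃((x_i),(y_i)) = sup_{i∈ℤ} d(x_i,y_i)/2^{|i|} on p(F,δ). -/
import Mathlib


open Metric Filter Topology

noncomputable section

/-- Forward composition along a symbol sequence: `F_{σ_n} = f_{λ_{n-1}} ∘ ⋯ ∘ f_{λ_0}`. -/
def fwdComp {X Λ : Type*} [TopologicalSpace X] (f : Λ → X ≃ₜ X) (σ : ℤ → Λ) : ℕ → X → X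
  | 0 => id
  | n + 1 => (f (σ (n : ℤ))) ∘ fwdComp f σ n

/-- Backward composition: `F_{σ_{-n}} = f_{λ_{-n}}⁻¹ ∘ ⋯ ∘ f_{λ_{-1}}⁻¹`. -/
def bwdComp {X Λ : Type*} [TopologicalSpace X] (f : Λ → X ≃ₜ X) (σ : ℤ → Λ) : ℕ → X → X
  | 0 => id
  | n + 1 => ((f (σ (-(n + 1 : ℕ) : ℤ))).symm : X → X) ∘ bwdComp f σ n

/-- `IFSComp f σ i = F_{σ_i}`. -/
def IFSComp {X Λ : Type*} [TopologicalSpace X] (f : Λ → X ≃ₜ X) (σ : ℤ → Λ) (i : ℤ) : X → X :=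
  if 0 ≤ i then fwdComp f σ i.toNat else bwdComp f σ (-i).toNat

/-- A two-sided δ-pseudo orbit along σ. -/
def IsPseudoOrbit {X Λ : Type*} [MetricSpace X] (f : Λ → X ≃ₜ X) (δ : ℝ) (x : ℤ → X)
    (σ : ℤ → Λ) : Prop :=
  ∀ i : ℤ, dist (f (σ i) (x i)) (x (i + 1)) < δ

/-- Expansivity with constant `e`. -/
def ExpansiveWith {X Λ : Type*} [MetricSpace X] (f : Λ → X ≃ₜ X) (e : ℝ) : Prop :=
  ∀ (σ : ℤ → Λ) (x y : X), (∀ i : ℤ, dist (IFSComp f σ i x) (IFSComp f σ i y) < e) → x = y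

/-- Strong expansivity with constant `e`. -/
def StronglyExpansiveWith {X Λ : Type*} [MetricSpace X] (f : Λ → X ≃ₜ X) (e : ℝ) : Prop :=
  ∀ (σ μ : ℤ → Λ) (x y : X), (∀ i : ℤ, dist (IFSComp f σ i x) (IFSComp f μ i y) < e) → x = y

/-- The shadowing property. -/
def HasShadowing {X Λ : Type*} [MetricSpace X] (f : Λ → X ≃ₜ X) : Prop :=
  ∀ ε > (0 : ℝ), ∃ δ > (0 : ℝ), ∀ (x : ℤ → X) (σ : ℤ → Λ), IsPseudoOrbit f δ x σ →
    ∃ (y : X) (τ : ℤ → Λ), ∀ i : ℤ, dist (IFSComp f τ i y) (x i) ≤ ε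

/-- The Lipschitz shadowing property. -/
def HasLipschitzShadowing {X Λ : Type*} [MetricSpace X] (f : Λ → X ≃ₜ X) : Prop :=
  ∃ L > (0 : ℝ), ∃ ε₀ > (0 : ℝ), ∀ ε : ℝ, 0 < ε → ε < ε₀ →
    ∀ (x : ℤ → X) (σ : ℤ → Λ), IsPseudoOrbit f ε x σ →
      ∃ (y : X) (τ : ℤ → Λ), ∀ i : ℤ, dist (IFSComp f τ i y) (x i) < L * ε

/-- The limit shadowing property with respect to a distance function `D`. -/
def HasLimitShadowingWith {X Λ : Type*} [TopologicalSpace X] (f : Λ → X ≃ₜ X)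
    (D : X → X → ℝ) : Prop :=
  ∀ (x : ℤ → X) (σ : ℤ → Λ),
    Tendsto (fun i : ℤ => D (f (σ i) (x i)) (x (i + 1))) atTop (nhds 0) →
    Tendsto (fun i : ℤ => D (f (σ i) (x i)) (x (i + 1))) atBot (nhds 0) →
    ∃ (y : X) (τ : ℤ → Λ),
      Tendsto (fun i : ℤ => D (x i) (IFSComp f τ i y)) atTop (nhds 0) ∧
      Tendsto (fun i : ℤ => D (x i) (IFSComp f τ i y)) atBot (nhds 0)

/-- The metric `d̃` on sequences. -/
def dTilde {X : Type*} [MetricSpace X] (x y : ℤ → X) : ℝ :=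
  ⨆ i : ℤ, dist (x i) (y i) / 2 ^ i.natAbs

/-- The continuous shadowing property. -/
def HasContinuousShadowing {X Λ : Type*} [MetricSpace X] (f : Λ → X ≃ₜ X) : Prop :=
  ∀ ε > (0 : ℝ), ∃ δ > (0 : ℝ),
    ∃ r : {p : (ℤ → X) × (ℤ → Λ) // IsPseudoOrbit f δ p.1 p.2} → X,
      (∀ p, ∀ i : ℤ, dist (IFSComp f p.val.2 i (r p)) (p.val.1 i) < ε) ∧
      (∀ p, ∀ α > (0 : ℝ), ∃ β > (0 : ℝ), ∀ q, dTilde p.val.1 q.val.1 < β →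
        dist (r p) (r q) < α)

lemma fwdComp_congr {X Λ : Type*} [TopologicalSpace X] (f : Λ → X ≃ₜ X) {σ τ : ℤ → Λ}
    (n : ℕ) (h : ∀ k : ℕ, k < n → σ (k : ℤ) = τ (k : ℤ)) :
    fwdComp f σ n = fwdComp f τ n := by
  induction n with
  | zero => rfl
  | succ m ih =>
    simp only [fwdComp, ih (fun k hk => h k (Nat.lt_succ_of_lt hk)), h m (Nat.lt_succ_self m)]

lemma bwdComp_congr {X Λ : Type*} [TopologicalSpace X] (f : Λ → X ≃ₜ X) {σ τ : ℤ → Λ}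
    (n : ℕ) (h : ∀ k : ℕ, k < n → σ (-(k + 1 : ℕ) : ℤ) = τ (-(k + 1 : ℕ) : ℤ)) :
    bwdComp f σ n = bwdComp f τ n := by
  induction n with
  | zero => rfl
  | succ m ih =>
    simp only [bwdComp, ih (fun k hk => h k (Nat.lt_succ_of_lt hk)), h m (Nat.lt_succ_self m)]

lemma IFSComp_congr {X Λ : Type*} [TopologicalSpace X] (f : Λ → X ≃ₜ X) {σ τ : ℤ → Λ}
    (i : ℤ) (h : ∀ j : ℤ, -(i.natAbs : ℤ) ≤ j → j < (i.natAbs : ℤ) → σ j = τ j) :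
    IFSComp f σ i = IFSComp f τ i := by
  unfold IFSComp
  split
  · rename_i hi
    exact fwdComp_congr f _ (fun k hk => h k (by omega) (by omega))
  · rename_i hi
    have h1 : ((-i).toNat : ℤ) = -i := Int.toNat_of_nonneg (by omega)
    have h2 : (i.natAbs : ℤ) = -i := by omega
    refine bwdComp_congr f _ (fun k hk => h _ ?_ ?_)
    all_goals
      have h3 : (k : ℤ) < -i := by rw [← h1]; exact_mod_cast hk
      rw [h2]
      push_cast
      omega

lemma continuous_fwdComp {X Λ : Type*} [TopologicalSpace X] (f : Λ → X ≃ₜ X) (σ : ℤ → Λ)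
    (n : ℕ) : Continuous (fwdComp f σ n) := by
  induction n with
  | zero => exact continuous_id
  | succ m ih => exact (f _).continuous.comp ih

lemma continuous_bwdComp {X Λ : Type*} [TopologicalSpace X] (f : Λ → X ≃ₜ X) (σ : ℤ → Λ)
    (n : ℕ) : Continuous (bwdComp f σ n) := by
  induction n with
  | zero => exact continuous_id
  | succ m ih => exact (f _).symm.continuous.comp ih

lemma continuous_IFSComp {X Λ : Type*} [TopologicalSpace X] (f : Λ → X ≃ₜ X) (σ : ℤ → Λ)
    (i : ℤ) : Continuous (IFSComp f σ i) := by
  unfold IFSComp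
  split
  · exact continuous_fwdComp f σ _
  · exact continuous_bwdComp f σ _

lemma dist_le_dTilde {X : Type*} [MetricSpace X] [CompactSpace X] (x y : ℤ → X) (i : ℤ) :
    dist (x i) (y i) ≤ 2 ^ i.natAbs * dTilde x y := by
  obtain ⟨C, hC⟩ := Metric.isBounded_iff.mp (isCompact_univ (X := X)).isBounded
  have hbdd : BddAbove (Set.range fun j : ℤ => dist (x j) (y j) / 2 ^ j.natAbs) := by
    refine ⟨C, fun c hc => ?_⟩
    obtain ⟨j, rfl⟩ := hc
    calc dist (x j) (y j) / 2 ^ j.natAbs ≤ dist (x j) (y j) :=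
          div_le_self dist_nonneg (one_le_pow₀ (by norm_num))
      _ ≤ C := hC (Set.mem_univ _) (Set.mem_univ _)
  have h1 : dist (x i) (y i) / 2 ^ i.natAbs ≤ dTilde x y := le_ciSup hbdd i
  rw [div_le_iff₀ (by positivity)] at h1
  linarith [h1]

/-- For a strongly expansive IFS with the shadowing property, the shadowing
map r on δ-pseudo orbits is well-defined (unique shadowing point) and continuous with
respect to the metric d̃. -/
theorem stmt_16 {X Λ : Type*} [MetricSpace X] [CompactSpace X] [Finite Λ] [Nonempty Λ]
    (f : Λ → X ≃ₜ X) (e : ℝ) (he : 0 < e) (hexp : StronglyExpansiveWith f e)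
    (ε δ : ℝ) (hε0 : 0 < ε) (hεe : ε < e / 3) (hδ : 0 < δ)
    (hsh : ∀ (x : ℤ → X) (σ : ℤ → Λ), IsPseudoOrbit f δ x σ →
      ∃ y : X, ∀ i : ℤ, dist (IFSComp f σ i y) (x i) ≤ ε) :
    ∃ r : {p : (ℤ → X) × (ℤ → Λ) // IsPseudoOrbit f δ p.1 p.2} → X,
      (∀ p, ∀ i : ℤ, dist (IFSComp f p.val.2 i (r p)) (p.val.1 i) ≤ ε) ∧
      (∀ p (y : X), (∀ i : ℤ, dist (IFSComp f p.val.2 i y) (p.val.1 i) ≤ ε) → y = r p) ∧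
      (∀ p, ∀ α > (0 : ℝ), ∃ β > (0 : ℝ), ∀ q, dTilde p.val.1 q.val.1 < β →
        dist (r p) (r q) < α) := by
  have h2ε : 2 * ε < e := by linarith
  have hr : ∀ p : {p : (ℤ → X) × (ℤ → Λ) // IsPseudoOrbit f δ p.1 p.2},
      ∃ y : X, ∀ i : ℤ, dist (IFSComp f p.val.2 i y) (p.val.1 i) ≤ ε :=
    fun p => hsh p.val.1 p.val.2 p.prop
  choose r hrspec using hr
  have huniq : ∀ p (y : X), (∀ i : ℤ, dist (IFSComp f p.val.2 i y) (p.val.1 i) ≤ ε) →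
      y = r p := by
    intro p y hy
    refine hexp p.val.2 p.val.2 y (r p) (fun i => ?_)
    calc dist (IFSComp f p.val.2 i y) (IFSComp f p.val.2 i (r p))
        ≤ dist (IFSComp f p.val.2 i y) (p.val.1 i)
          + dist (p.val.1 i) (IFSComp f p.val.2 i (r p)) := dist_triangle _ _ _
      _ ≤ ε + ε := add_le_add (hy i) (by rw [dist_comm]; exact hrspec p i)
      _ < e := by linarith
  refine ⟨r, hrspec, huniq, ?_⟩
  intro p α hα
  by_contra hcon
  push_neg at hcon
  choose Q hQ1 hQ2 using fun n : ℕ => hcon (1 / (n + 1)) (by positivity)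
  -- ultrafilter extending atTop
  set U : Ultrafilter ℕ := Ultrafilter.of atTop with hUdef
  have hU : (U : Filter ℕ) ≤ atTop := Ultrafilter.of_le _
  -- limit point of the shadowing points
  obtain ⟨z, -, hz⟩ := isCompact_univ.ultrafilter_le_nhds (U.map fun n => r (Q n))
    (le_principal_iff.mpr Filter.univ_mem)
  have hz' : Tendsto (fun n => r (Q n)) (U : Filter ℕ) (𝓝 z) := by
    rwa [Ultrafilter.coe_map] at hz
  -- limit symbol sequence
  have hτex : ∀ i : ℤ, ∃ a : Λ, {n : ℕ | (Q n).val.2 i = a} ∈ U := by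
    intro i
    by_contra hco
    push_neg at hco
    have hmem : (⋂ a : Λ, {n : ℕ | (Q n).val.2 i = a}ᶜ) ∈ U :=
      (Filter.iInter_mem).2 fun a => (Ultrafilter.compl_mem_iff_notMem).2 (hco a)
    obtain ⟨n, hn⟩ := Filter.nonempty_of_mem hmem
    simp only [Set.mem_iInter, Set.mem_compl_iff, Set.mem_setOf_eq] at hn
    exact hn _ rfl
  choose τ hτ using hτex
  -- z shadows p along τ
  have hzshad : ∀ i : ℤ, dist (IFSComp f τ i z) (p.val.1 i) ≤ ε := by
    intro i
    have hcont : Tendsto (fun n => IFSComp f τ i (r (Q n))) (U : Filter ℕ)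
        (𝓝 (IFSComp f τ i z)) := ((continuous_IFSComp f τ i).tendsto z).comp hz'
    have hxq : Tendsto (fun n => (Q n).val.1 i) (U : Filter ℕ) (𝓝 (p.val.1 i)) := by
      rw [tendsto_iff_dist_tendsto_zero]
      refine squeeze_zero (fun n => dist_nonneg)
        (g := fun n : ℕ => 2 ^ i.natAbs * (1 / (n + 1))) (fun n => ?_) ?_
      · calc dist ((Q n).val.1 i) (p.val.1 i) = dist (p.val.1 i) ((Q n).val.1 i) :=
              dist_comm _ _
          _ ≤ 2 ^ i.natAbs * dTilde p.val.1 (Q n).val.1 := dist_le_dTilde _ _ i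
          _ ≤ 2 ^ i.natAbs * (1 / (n + 1)) :=
              mul_le_mul_of_nonneg_left (hQ1 n).le (by positivity)
      · have : Tendsto (fun n : ℕ => (1 : ℝ) / (n + 1)) atTop (𝓝 0) :=
          tendsto_one_div_add_atTop_nhds_zero_nat
        simpa using ((this.const_mul ((2 : ℝ) ^ i.natAbs)).mono_left hU)
    have hdist : Tendsto (fun n => dist (IFSComp f τ i (r (Q n))) ((Q n).val.1 i))
        (U : Filter ℕ) (𝓝 (dist (IFSComp f τ i z) (p.val.1 i))) := hcont.dist hxq
    refine le_of_tendsto hdist ?_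
    have hwin : (⋂ j ∈ Finset.Icc (-(i.natAbs : ℤ)) (i.natAbs : ℤ),
        {n : ℕ | (Q n).val.2 j = τ j}) ∈ U :=
      (Filter.biInter_finset_mem _).2 fun j _ => hτ j
    filter_upwards [hwin] with n hn
    have hEq : IFSComp f ((Q n).val.2) i = IFSComp f τ i := by
      refine IFSComp_congr f i (fun j hj1 hj2 => ?_)
      have := Set.mem_iInter₂.mp hn j (Finset.mem_Icc.mpr ⟨hj1, hj2.le⟩)
      exact this
    rw [← hEq]
    exact hrspec (Q n) i
  -- strong expansivity: z = r p
  have hzrp : z = r p := by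
    refine hexp τ p.val.2 z (r p) (fun i => ?_)
    calc dist (IFSComp f τ i z) (IFSComp f p.val.2 i (r p))
        ≤ dist (IFSComp f τ i z) (p.val.1 i)
          + dist (p.val.1 i) (IFSComp f p.val.2 i (r p)) := dist_triangle _ _ _
      _ ≤ ε + ε := add_le_add (hzshad i) (by rw [dist_comm]; exact hrspec p i)
      _ < e := by linarith
  -- contradiction
  have hev : ∀ᶠ n in (U : Filter ℕ), dist (r (Q n)) (r p) < α := by
    rw [← hzrp]
    exact (Metric.tendsto_nhds.mp hz') α hα
  obtain ⟨n, hn⟩ := (hev.and (Filter.Eventually.of_forall hQ2)).exists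
  rw [dist_comm] at hn
  exact absurd hn.2 (not_le.mpr hn.1)
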